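/- Let A = {a_0 < ... < a_{k-1}} ⊆ C_n. The layer L^{a_0+1}_{a_0}(σ^{(n)}(A)), consisting of all α ∈ σ^{(n)}(A) taking the value a_0 exactly a_0+1 times, is closed under pointwise max and under composition; moreover for any α in this layer, every power α^m lies in this layer. -/
import Mathlib

/-- The `s`-th layer of the simplex `σ^{(n)}(A)` with respect to a value `a`: all monotone maps
with range in `A` taking the value `a` exactly `s` times. -/
def layer (n : ℕ) (A : Set (Fin n)) (a : Fin n) (s : ℕ) : Set (Fin n → Fin n) :=
  {α | Monotone α ∧ Set.range α ⊆ A ∧ (Finset.univ.filter fun i => α i = a).card = s}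

lemma aux_card (n : ℕ) (a0 : Fin n) :
    (Finset.univ.filter fun i : Fin n => i ≤ a0).card = (a0 : ℕ) + 1 := by
  have : (Finset.univ.filter fun i : Fin n => i ≤ a0) = Finset.Iic a0 := by
    ext i; simp
  rw [this, Fin.card_Iic]

lemma aux_char {n : ℕ} {A : Set (Fin n)} {a0 : Fin n} (ha0 : a0 ∈ A)
    (hleast : ∀ x ∈ A, a0 ≤ x) {α : Fin n → Fin n}
    (hα : α ∈ layer n A a0 ((a0 : ℕ) + 1)) : ∀ i, α i = a0 ↔ i ≤ a0 := by
  obtain ⟨hmono, hrange, hcard⟩ := hα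
  have hge : ∀ i, a0 ≤ α i := fun i => hleast _ (hrange ⟨i, rfl⟩)
  set S := Finset.univ.filter fun i => α i = a0 with hS
  have hne : S.Nonempty := by
    rw [← Finset.card_pos, hcard]; omega
  set M := S.max' hne with hM
  have hMmem : α M = a0 := by
    have := S.max'_mem hne
    simpa [hS] using this
  have hSeq : S = Finset.Iic M := by
    ext i
    simp only [hS, Finset.mem_filter, Finset.mem_univ, true_and, Finset.mem_Iic]
    constructor
    · intro h
      exact S.le_max' i (by simp [hS, h])
    · intro h
      exact le_antisymm (hMmem ▸ hmono h) (hge i)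
  have : (M : ℕ) + 1 = (a0 : ℕ) + 1 := by
    rw [← Fin.card_Iic M, ← hSeq, hcard]
  have hMa : M = a0 := Fin.ext (by omega)
  intro i
  have : i ∈ S ↔ α i = a0 := by simp [hS]
  rw [← this, hSeq, Finset.mem_Iic, hMa]

lemma aux_comp {n : ℕ} {A : Set (Fin n)} {a0 : Fin n} (ha0 : a0 ∈ A)
    (hleast : ∀ x ∈ A, a0 ≤ x) {α β : Fin n → Fin n}
    (hα : α ∈ layer n A a0 ((a0 : ℕ) + 1)) (hβ : β ∈ layer n A a0 ((a0 : ℕ) + 1)) :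
    (β ∘ α) ∈ layer n A a0 ((a0 : ℕ) + 1) := by
  have hcα := aux_char ha0 hleast hα
  have hcβ := aux_char ha0 hleast hβ
  have hgeα : ∀ i, a0 ≤ α i := fun i => hleast _ (hα.2.1 ⟨i, rfl⟩)
  refine ⟨hβ.1.comp hα.1, ?_, ?_⟩
  · rintro x ⟨i, rfl⟩; exact hβ.2.1 ⟨α i, rfl⟩
  · have : (Finset.univ.filter fun i => (β ∘ α) i = a0)
        = Finset.univ.filter fun i : Fin n => i ≤ a0 := by
      ext i
      simp only [Finset.mem_filter, Finset.mem_univ, true_and, Function.comp]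
      rw [hcβ]
      constructor
      · intro h
        exact (hcα i).1 (le_antisymm h (hgeα i))
      · intro h
        exact ((hcα i).2 h).le
    rw [this, aux_card]

/-- For `a0` the least element of `A`, the layer `L^{a0+1}_{a0}(σ^{(n)}(A))` is
closed under pointwise max, under composition, and under taking positive powers. -/
theorem stmt8 (n : ℕ) (A : Set (Fin n)) (a0 : Fin n) (ha0 : a0 ∈ A)
    (hleast : ∀ x ∈ A, a0 ≤ x) :
    ∀ α ∈ layer n A a0 ((a0 : ℕ) + 1), ∀ β ∈ layer n A a0 ((a0 : ℕ) + 1),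
      (fun i => max (α i) (β i)) ∈ layer n A a0 ((a0 : ℕ) + 1) ∧
      (β ∘ α) ∈ layer n A a0 ((a0 : ℕ) + 1) ∧
      (∀ m : ℕ, 1 ≤ m → α^[m] ∈ layer n A a0 ((a0 : ℕ) + 1)) := by
  intro α hα β hβ
  have hcα := aux_char ha0 hleast hα
  have hcβ := aux_char ha0 hleast hβ
  refine ⟨?_, aux_comp ha0 hleast hα hβ, ?_⟩
  · refine ⟨hα.1.max hβ.1, ?_, ?_⟩
    · rintro x ⟨i, rfl⟩
      show max (α i) (β i) ∈ A
      rcases max_choice (α i) (β i) with h | h <;> rw [h]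
      · exact hα.2.1 ⟨i, rfl⟩
      · exact hβ.2.1 ⟨i, rfl⟩
    · show (Finset.univ.filter fun i => max (α i) (β i) = a0).card = (a0 : ℕ) + 1
      have : (Finset.univ.filter fun i => max (α i) (β i) = a0)
          = Finset.univ.filter fun i : Fin n => i ≤ a0 := by
        ext i
        simp only [Finset.mem_filter, Finset.mem_univ, true_and]
        constructor
        · intro h
          exact (hcα i).1 (le_antisymm (h ▸ le_max_left _ _) (hleast _ (hα.2.1 ⟨i, rfl⟩)))
        · intro h
          rw [(hcα i).2 h, (hcβ i).2 h, max_self]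
      rw [this, aux_card]
  · intro m hm
    induction m with
    | zero => omega
    | succ k ih =>
      rcases Nat.eq_or_lt_of_le hm with h | h
      · obtain rfl : k = 0 := by omega
        simpa using hα
      · have hk : α^[k] ∈ layer n A a0 ((a0 : ℕ) + 1) := ih (by omega)
        rw [Function.iterate_succ]
        exact aux_comp ha0 hleast hα hk
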